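/- In a fieldoid, there are no zero divisors: if a and b are non-zero elements and a × b is defined, then a × b is not a zero element. -/
import Mathlib


/-- A fieldoid: like a partially additive field, but both addition and multiplication are
partial operations (modeled via `Option`, `none` = undefined). Each non-zero element has its
own multiplicative identity `1_a`. -/
structure Fieldoid (Q : Type*) where
  add : Q → Q → Option Q
  mul : Q → Q → Option Q
  zero : Q → Q
  one : Q → Q
  neg : Q → Q
  inv : Q → Q
  add_comm : ∀ a b, add a b = add b a
  mul_comm : ∀ a b, mul a b = mul b a
  add_assoc : ∀ a b c, (add a b).bind (fun x => add x c) = (add b c).bind (fun x => add a x)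
  mul_assoc : ∀ a b c, (mul a b).bind (fun x => mul x c) = (mul b c).bind (fun x => mul a x)
  left_distrib : ∀ a b c, (add b c).bind (fun x => mul a x) =
    (mul a b).bind (fun x => (mul a c).bind (fun y => add x y))
  add_zero : ∀ a, add a (zero a) = some a
  zero_unique : ∀ a z, add a z = some a → z = zero a
  mul_one : ∀ a, (¬ ∃ b, a = zero b) → mul a (one a) = some a
  one_unique : ∀ a e, (¬ ∃ b, a = zero b) → mul a e = some a → e = one a
  add_neg : ∀ a, add a (neg a) = some (zero a)
  mul_inv : ∀ a, (¬ ∃ b, a = zero b) → mul a (inv a) = some (one a)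
  nontrivial : ∀ a b, a = zero b → ∃ c, (¬ ∃ d, c = zero d) ∧ a = zero c

namespace Fieldoid
variable {Q : Type*} (F : Fieldoid Q)

/-- `a` is a zero element. -/
def IsZero (a : Q) : Prop := ∃ b, a = F.zero b

/-- `a` and `b` are summable (their sum is defined). -/
def Summable (a b : Q) : Prop := (F.add a b).isSome

/-- `a` and `b` are multipliable (their product is defined). -/
def Mulable (a b : Q) : Prop := (F.mul a b).isSome

end Fieldoid

namespace FieldoidAux
variable {Q : Type*} (F : Fieldoid Q)

/-- p·q = r implies p·0_q = 0_r. -/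
lemma mul_zero_right {p q r : Q} (h : F.mul p q = some r) :
    F.mul p (F.zero q) = some (F.zero r) := by
  have hd := F.left_distrib p q (F.zero q)
  rw [F.add_zero q] at hd
  simp only [Option.bind_some] at hd
  rw [h] at hd
  simp only [Option.bind_some] at hd
  cases hm : F.mul p (F.zero q) with
  | none => rw [hm] at hd; simp at hd
  | some t =>
    rw [hm] at hd
    simp only [Option.bind_some] at hd
    exact congrArg some (F.zero_unique r t hd.symm)

/-- A zero element is its own zero. -/
lemma zero_self {z w : Q} (h : z = F.zero w) : z = F.zero z := by
  have hw : F.add w z = some w := by rw [h]; exact F.add_zero w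
  have hd := F.add_assoc w z z
  rw [hw] at hd
  simp only [Option.bind_some] at hd
  rw [hw] at hd
  cases hy : F.add z z with
  | none => rw [hy] at hd; simp at hd
  | some y =>
    rw [hy] at hd
    simp only [Option.bind_some] at hd
    have hyz : y = z := by rw [F.zero_unique w y hd.symm, ← h]
    rw [hyz] at hy
    exact F.zero_unique z z hy

/-- The identity of a non-zero element is non-zero. -/
lemma one_not_zero {x : Q} (hx : ¬ ∃ e, x = F.zero e) : ¬ ∃ e, F.one x = F.zero e := by
  rintro ⟨e, he⟩
  have h1 : F.one x = F.zero (F.one x) := zero_self F he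
  have h2 := mul_zero_right F (F.mul_one x hx)
  rw [← h1, F.mul_one x hx] at h2
  exact hx ⟨x, (Option.some_inj.mp h2)⟩

lemma one_mul' {x : Q} (hx : ¬ ∃ e, x = F.zero e) : F.mul (F.one x) x = some x := by
  rw [F.mul_comm]; exact F.mul_one x hx

/-- A nonzero product transfers identities: 1_x = 1_w. -/
lemma ones_eq {x y w : Q} (hx : ¬ ∃ e, x = F.zero e) (hw : ¬ ∃ e, w = F.zero e)
    (h : F.mul x y = some w) : F.one x = F.one w := by
  have hd := F.mul_assoc (F.one x) x y
  rw [one_mul' F hx] at hd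
  simp only [Option.bind_some] at hd
  rw [h] at hd
  simp only [Option.bind_some] at hd
  -- hd : some w = F.mul (F.one x) w  (direction check at compile)
  have : F.mul w (F.one x) = some w := by rw [F.mul_comm]; exact hd.symm
  exact F.one_unique w (F.one x) hw this

lemma one_one {x : Q} (hx : ¬ ∃ e, x = F.zero e) : F.one (F.one x) = F.one x :=
  ones_eq F (one_not_zero F hx) hx (one_mul' F hx)

/-- Key lemma: M·x = 0_M is impossible for nonzero M, x. -/
lemma key {M x : Q} (hM : ¬ ∃ e, M = F.zero e) (hx : ¬ ∃ e, x = F.zero e)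
    (h : F.mul M x = some (F.zero M)) : False := by
  have hd := F.left_distrib M x (F.one M)
  rw [h, F.mul_one M hM] at hd
  simp only [Option.bind_some] at hd
  have hzM : F.add (F.zero M) M = some M := by rw [F.add_comm]; exact F.add_zero M
  rw [hzM] at hd
  cases hs : F.add x (F.one M) with
  | none => rw [hs] at hd; simp at hd
  | some s =>
    rw [hs] at hd
    simp only [Option.bind_some] at hd
    have hsone : s = F.one M := F.one_unique M s hM hd
    rw [hsone] at hs
    have : F.add (F.one M) x = some (F.one M) := by rw [F.add_comm]; exact hs
    exact hx ⟨F.one M, F.zero_unique (F.one M) x this⟩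

/-- X·W = 0_W implies X·1_W = 0_{1_W}. -/
lemma lemma2 {X W : Q} (hW : ¬ ∃ e, W = F.zero e)
    (h : F.mul X W = some (F.zero W)) : F.mul X (F.one W) = some (F.zero (F.one W)) := by
  have hd := F.mul_assoc X W (F.inv W)
  rw [h, F.mul_inv W hW] at hd
  simp only [Option.bind_some] at hd
  have hiW : F.mul (F.inv W) W = some (F.one W) := by rw [F.mul_comm]; exact F.mul_inv W hW
  have hz : F.mul (F.zero W) (F.inv W) = some (F.zero (F.one W)) := by
    rw [F.mul_comm]; exact mul_zero_right F hiW
  rw [hz] at hd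
  exact hd.symm

/-- Combined: a product of nonzero elements is never the zero of a factor. -/
lemma combo {X W : Q} (hX : ¬ ∃ e, X = F.zero e) (hW : ¬ ∃ e, W = F.zero e)
    (h : F.mul X W = some (F.zero W)) : False := by
  have h2 := lemma2 F hW h
  have h3 : F.mul (F.one W) X = some (F.zero (F.one W)) := by rw [F.mul_comm]; exact h2
  exact key F (one_not_zero F hW) hX h3

end FieldoidAux

/-- A fieldoid has no zero divisors: a defined product of non-zero elements is non-zero. -/
theorem no_zero_divisors_fieldoid {Q : Type*} (F : Fieldoid Q) (a b : Q)
    (ha : ¬ F.IsZero a) (hb : ¬ F.IsZero b) :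
    ∀ c : Q, F.mul a b = some c → ¬ F.IsZero c := by
  intro c hmul hc
  have ha' : ¬ ∃ e, a = F.zero e := ha
  have hb' : ¬ ∃ e, b = F.zero e := hb
  obtain ⟨d, hcd⟩ := hc
  obtain ⟨c', hc'nz, hcc'⟩ := F.nontrivial c d hcd
  have hcc : c = F.zero c := FieldoidAux.zero_self F hcd
  have hmul' : F.mul b a = some c := by rw [F.mul_comm]; exact hmul
  -- Step 1: 1_a · c = c and 1_b · c = c
  have h1ac : F.mul (F.one a) c = some c := by
    have hd := F.mul_assoc (F.one a) a b
    rw [FieldoidAux.one_mul' F ha'] at hd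
    simp only [Option.bind_some] at hd
    rw [hmul] at hd
    simp only [Option.bind_some] at hd
    exact hd.symm
  have h1bc : F.mul (F.one b) c = some c := by
    have hd := F.mul_assoc (F.one b) b a
    rw [FieldoidAux.one_mul' F hb'] at hd
    simp only [Option.bind_some] at hd
    rw [hmul'] at hd
    simp only [Option.bind_some] at hd
    exact hd.symm
  -- For a nonzero x with 1_x·c = c, prove 1_x = 1_{c'}
  have main : ∀ x : Q, (¬ ∃ e, x = F.zero e) → F.mul (F.one x) c = some c →
      F.one x = F.one c' := by
    intro x hx h1xc
    -- 1_x · c' is defined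
    have hd := F.left_distrib (F.one x) c' (F.neg c')
    rw [F.add_neg c', ← hcc'] at hd
    simp only [Option.bind_some] at hd
    rw [h1xc] at hd
    cases hp : F.mul (F.one x) c' with
    | none => rw [hp] at hd; simp at hd
    | some p =>
      -- add p c = some p, hence c = zero p
      have hd3 := F.left_distrib (F.one x) c' c
      have hac' : F.add c' c = some c' := by rw [hcc']; exact F.add_zero c'
      rw [hac'] at hd3
      simp only [Option.bind_some] at hd3
      rw [hp, h1xc] at hd3
      simp only [Option.bind_some] at hd3
      have hczp : c = F.zero p := F.zero_unique p c hd3.symm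
      by_cases hp0 : ∃ e, p = F.zero e
      · -- p is zero: then p = c, so 1_x · c' = zero c' : contradiction by combo
        have hpp : p = F.zero p := FieldoidAux.zero_self F hp0.choose_spec
        have hpc : p = c := by rw [hpp, ← hczp]
        rw [hpc, hcc'] at hp
        exact absurd (FieldoidAux.combo F (FieldoidAux.one_not_zero F hx) hc'nz hp) id
      · -- p nonzero: identities transfer
        have e1 : F.one (F.one x) = F.one p :=
          FieldoidAux.ones_eq F (FieldoidAux.one_not_zero F hx) hp0 hp
        have hp' : F.mul c' (F.one x) = some p := by rw [F.mul_comm]; exact hp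
        have e2 : F.one c' = F.one p := FieldoidAux.ones_eq F hc'nz hp0 hp'
        rw [FieldoidAux.one_one F hx] at e1
        rw [e1, e2]
  have hoa : F.one a = F.one c' := main a ha' h1ac
  have hob : F.one b = F.one c' := main b hb' h1bc
  -- Step 6: mul (inv b) c = some v', v' zero, and mul a (one b) = some v'
  have hbbinv : F.mul b (F.inv b) = some (F.one b) := F.mul_inv b hb'
  have hd6 := F.mul_assoc b (F.inv b) c
  rw [hbbinv] at hd6
  simp only [Option.bind_some] at hd6
  rw [h1bc] at hd6
  cases hv : F.mul (F.inv b) c with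
  | none => rw [hv] at hd6; simp at hd6
  | some v =>
    have hvz : v = F.zero v := by
      have := FieldoidAux.mul_zero_right F hv
      rw [← hcc, hv] at this
      exact Option.some_inj.mp this
    have hd7 := F.mul_assoc a b (F.inv b)
    rw [hmul, hbbinv] at hd7
    simp only [Option.bind_some] at hd7
    have hcv : F.mul c (F.inv b) = some v := by rw [F.mul_comm]; exact hv
    rw [hcv] at hd7
    -- hd7 : some v = F.mul a (F.one b)
    have hav : F.mul a (F.one b) = some v := hd7.symm
    rw [hob, ← hoa] at hav
    rw [F.mul_one a ha'] at hav
    exact ha ⟨v, by rw [Option.some_inj.mp hav]; exact hvz⟩
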